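/- Let α, β, χ ∈ ℂ with |α| = 1, and suppose the 3×3 complex matrix with rows (1, α, χ), (conj(α), 1, β), (conj(χ), conj(β), 1) is positive semidefinite. Then χ = αβ. -/

import Mathlib

open scoped ComplexOrder

theorem stmt_5 (α β χ : ℂ) (hα : ‖α‖ = 1)
    (h : (!![1, α, χ;
             (starRingEnd ℂ) α, 1, β;
             (starRingEnd ℂ) χ, (starRingEnd ℂ) β, 1] :
          Matrix (Fin 3) (Fin 3) ℂ).PosSemidef) :
    χ = α * β := by
  have hαα : (starRingEnd ℂ) α * α = 1 := by
    rw [mul_comm, Complex.mul_conj]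
    norm_cast
    rw [← Complex.sq_norm, hα]; norm_num
  set M : Matrix (Fin 3) (Fin 3) ℂ :=
    !![1, α, χ; (starRingEnd ℂ) α, 1, β; (starRingEnd ℂ) χ, (starRingEnd ℂ) β, 1]
  set v : Fin 3 → ℂ := ![α, -1, 0]
  have hquad : dotProduct (star v) (M.mulVec v) = 0 := by
    simp [M, v, Matrix.mulVec, dotProduct, Fin.sum_univ_three, hαα]
  have hMv : M.mulVec v = 0 := (h.dotProduct_mulVec_zero_iff v).mp hquad
  have h3 := congrFun hMv 2
  simp [M, v, Matrix.mulVec, dotProduct, Fin.sum_univ_three] at h3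
  -- h3 : (starRingEnd ℂ) χ * α - (starRingEnd ℂ) β = 0 (or similar)
  have h4 : (starRingEnd ℂ) χ * α = (starRingEnd ℂ) β := by linear_combination h3
  have h5 := congrArg (starRingEnd ℂ) h4
  simp at h5
  calc χ = α * ((starRingEnd ℂ) α * χ) := by rw [← mul_assoc, mul_comm α, hαα, one_mul]
  _ = α * β := by rw [mul_comm ((starRingEnd ℂ) α), h5]
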